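/- arXiv:2410.02407 — 2 statements merged into one kernel-verified Lean document; each statement's English description precedes it below -/
import Mathlib

section
/- Suppose d is odd. Let p ≠ q in ZMod d, let a, b ∈ ZMod d, and let v, w be N-qudit vectors with Z̄ v = ζ^a v and Z̄ w = ζ^b w. If ⟨v| S~^(p,q) |w⟩ = 0, then ⟨v| A~^(p,q) |w⟩ = 0. -/
open Matrix Complex Finset

/-- ζ = exp(2πi/d). -/
noncomputable def zeta (d : ℕ) : ℂ := Complex.exp (2 * Real.pi * Complex.I / d)

/-- The shift matrix X = Σ_p |p+1⟩⟨p|. -/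
noncomputable def shiftX (d : ℕ) [NeZero d] : Matrix (ZMod d) (ZMod d) ℂ :=
  ∑ p : ZMod d, Matrix.single (p + 1) p 1

/-- The clock matrix Z = Σ_p ζ^p |p⟩⟨p|. -/
noncomputable def clockZ (d : ℕ) [NeZero d] : Matrix (ZMod d) (ZMod d) ℂ :=
  ∑ p : ZMod d, Matrix.single p p (zeta d ^ p.val)

/-- S^(j,k) = |j⟩⟨k| + |k⟩⟨j|. -/
noncomputable def Smat (d : ℕ) (j k : ZMod d) : Matrix (ZMod d) (ZMod d) ℂ :=
  Matrix.single j k 1 + Matrix.single k j 1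

/-- A^(j,k) = −i|j⟩⟨k| + i|k⟩⟨j|. -/
noncomputable def Amat (d : ℕ) (j k : ZMod d) : Matrix (ZMod d) (ZMod d) ℂ :=
  (-Complex.I) • Matrix.single j k 1 + Complex.I • Matrix.single k j 1

/-- D^(ℓ) = |ℓ⟩⟨ℓ| − |ℓ+1⟩⟨ℓ+1|. -/
noncomputable def Dmat (d : ℕ) (ℓ : ZMod d) : Matrix (ZMod d) (ZMod d) ℂ :=
  Matrix.single ℓ ℓ 1 - Matrix.single (ℓ + 1) (ℓ + 1) 1

/-- M acting at site i of an N-qudit system. -/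
noncomputable def site (d N : ℕ) [NeZero d] (M : Matrix (ZMod d) (ZMod d) ℂ) (i : Fin N) :
    Matrix (Fin N → ZMod d) (Fin N → ZMod d) ℂ :=
  Matrix.of fun f g =>
    M (f i) (g i) * ∏ j ∈ Finset.univ.erase i, (if f j = g j then (1 : ℂ) else 0)

/-- The collective operator M~ = Σ_i M_[i]. -/
noncomputable def coll (d N : ℕ) [NeZero d] (M : Matrix (ZMod d) (ZMod d) ℂ) :
    Matrix (Fin N → ZMod d) (Fin N → ZMod d) ℂ :=
  ∑ i : Fin N, site d N M i

/-- The N-fold tensor power of a d×d matrix. -/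
noncomputable def tpow (d N : ℕ) [NeZero d] (M : Matrix (ZMod d) (ZMod d) ℂ) :
    Matrix (Fin N → ZMod d) (Fin N → ZMod d) ℂ :=
  Matrix.of fun f g => ∏ i : Fin N, M (f i) (g i)

/-- Inner product of N-qudit vectors, conjugate-linear in the first argument. -/
noncomputable def qinner (d N : ℕ) [NeZero d] (v w : (Fin N → ZMod d) → ℂ) : ℂ :=
  ∑ f : Fin N → ZMod d, star (v f) * w f

/-- A content u is admissible if all entries are nonnegative and they sum to N. -/
def admissible (d N : ℕ) [NeZero d] (u : ZMod d → ℤ) : Prop :=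
  (∀ k, 0 ≤ u k) ∧ ∑ k : ZMod d, u k = (N : ℤ)

/-- The Dicke vector |S_u⟩: sum of standard basis vectors over all f with |f⁻¹{k}| = u_k. -/
noncomputable def dicke (d N : ℕ) [NeZero d] (u : ZMod d → ℤ) : (Fin N → ZMod d) → ℂ :=
  fun f =>
    if ∀ k : ZMod d, ((Finset.univ.filter fun i => f i = k).card : ℤ) = u k then 1 else 0

/-- The weight Σ_{m=0}^{d−1} m·u_m of a content. -/
def cweight (d : ℕ) (u : ZMod d → ℤ) : ℤ :=
  ∑ m ∈ Finset.range d, (m : ℤ) * u ((m : ℕ) : ZMod d)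

/-- The code word |0̄⟩ determined by coefficients α. -/
noncomputable def codeZero (d N : ℕ) [NeZero d] (α : (ZMod d → ℤ) →₀ ℂ) :
    (Fin N → ZMod d) → ℂ :=
  α.sum fun u c => c • dicke d N u

/-- The code word |k̄⟩ = X̄^k |0̄⟩. -/
noncomputable def codeword (d N : ℕ) [NeZero d] (α : (ZMod d → ℤ) →₀ ℂ) (k : ZMod d) :
    (Fin N → ZMod d) → ℂ :=
  (tpow d N (shiftX d)) ^ k.val *ᵥ codeZero d N α

/-- Sparseness of the code determined by α. -/
def sparse (d : ℕ) [NeZero d] (α : (ZMod d → ℤ) →₀ ℂ) : Prop :=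
  ∀ u ∈ α.support, ∀ u' ∈ α.support, ∀ δ : ZMod d,
    (u, δ) ≠ (u', (0 : ZMod d)) → 4 < ∑ ξ : ZMod d, |u ξ - u' (ξ + δ)|


section Aux

variable {d N : ℕ} [NeZero d]

lemma zeta_ne_zero (d : ℕ) : zeta d ≠ 0 := Complex.exp_ne_zero _

omit [NeZero d] in
lemma std_apply (r s j k : ZMod d) (c : ℂ) :
    Matrix.single r s c j k = if r = j ∧ s = k then c else 0 := rfl

lemma zeta_prim (d : ℕ) [NeZero d] : IsPrimitiveRoot (zeta d) d :=
  Complex.isPrimitiveRoot_exp d (NeZero.ne d)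

lemma clockZ_apply (j k : ZMod d) :
    clockZ d j k = if j = k then zeta d ^ j.val else 0 := by
  classical
  simp only [clockZ, Matrix.sum_apply, std_apply]
  rw [Finset.sum_eq_single j]
  · by_cases h : j = k <;> simp [h]
  · intro p _ hp; exact if_neg fun h => hp h.1
  · simp

lemma tpow_clockZ_eq (d N : ℕ) [NeZero d] :
    tpow d N (clockZ d) =
      Matrix.diagonal (fun f : Fin N → ZMod d => ∏ i, zeta d ^ (f i).val) := by
  classical
  ext f g
  by_cases h : f = g
  · subst h; simp [tpow, Matrix.diagonal, clockZ_apply]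
  · obtain ⟨i, hi⟩ := Function.ne_iff.mp h
    simp only [tpow, Matrix.of_apply, Matrix.diagonal_apply_ne _ h]
    exact Finset.prod_eq_zero (Finset.mem_univ i) (by simp [clockZ_apply, hi])

lemma site_eq_zero_or (r s : ZMod d) (i : Fin N) (f g : Fin N → ZMod d) :
    site d N (Matrix.single r s (1:ℂ)) i f g = 0 ∨
      (f i = r ∧ g i = s ∧ ∀ j ∈ Finset.univ.erase i, f j = g j) := by
  classical
  by_cases h1 : f i = r ∧ g i = s ∧ ∀ j ∈ Finset.univ.erase i, f j = g j
  · exact Or.inr h1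
  · left
    simp only [site, Matrix.of_apply, std_apply]
    push_neg at h1
    by_cases hf : f i = r
    · by_cases hg : g i = s
      · obtain ⟨j, hj, hij⟩ := h1 hf hg
        exact mul_eq_zero_of_right _ (Finset.prod_eq_zero hj (by simp [hij]))
      · exact mul_eq_zero_of_left (if_neg fun h => hg h.2.symm) _
    · exact mul_eq_zero_of_left (if_neg fun h => hf h.1.symm) _

lemma diag_comm (d N : ℕ) [NeZero d] (r s : ZMod d) :
    Matrix.diagonal (fun f : Fin N → ZMod d => ∏ i, zeta d ^ (f i).val) *
      coll d N (Matrix.single r s 1) =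
    (zeta d ^ r.val * (zeta d ^ s.val)⁻¹) •
      (coll d N (Matrix.single r s 1) *
        Matrix.diagonal (fun f : Fin N → ZMod d => ∏ i, zeta d ^ (f i).val)) := by
  classical
  ext f g
  simp only [Matrix.smul_apply, smul_eq_mul, Matrix.diagonal_mul, Matrix.mul_diagonal,
    coll, Matrix.sum_apply, Finset.mul_sum, Finset.sum_mul]
  refine Finset.sum_congr rfl fun i _ => ?_
  rcases site_eq_zero_or r s i f g with hz | ⟨hf, hg, hfg⟩
  · simp [hz]
  · have hPf : (∏ j, zeta d ^ (f j).val)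
        = zeta d ^ r.val * ∏ j ∈ Finset.univ.erase i, zeta d ^ (f j).val := by
      rw [← hf]; exact (Finset.mul_prod_erase _ _ (Finset.mem_univ i)).symm
    have hPg : (∏ j, zeta d ^ (g j).val)
        = zeta d ^ s.val * ∏ j ∈ Finset.univ.erase i, zeta d ^ (g j).val := by
      rw [← hg]; exact (Finset.mul_prod_erase _ _ (Finset.mem_univ i)).symm
    have hPP : (∏ j ∈ Finset.univ.erase i, zeta d ^ (f j).val)
        = ∏ j ∈ Finset.univ.erase i, zeta d ^ (g j).val :=
      Finset.prod_congr rfl fun j hj => by rw [hfg j hj]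
    rw [hPf, hPg, hPP]
    have hs : (zeta d : ℂ) ^ s.val ≠ 0 := pow_ne_zero _ (zeta_ne_zero d)
    field_simp

lemma qinner_eig (d N : ℕ) [NeZero d] (v x : (Fin N → ZMod d) → ℂ) (a : ZMod d)
    (hv : tpow d N (clockZ d) *ᵥ v = zeta d ^ a.val • v) :
    qinner d N v (tpow d N (clockZ d) *ᵥ x) = zeta d ^ a.val * qinner d N v x := by
  classical
  rw [tpow_clockZ_eq] at hv ⊢
  have hv' : ∀ f, (∏ i, zeta d ^ (f i).val) * v f = zeta d ^ a.val * v f := by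
    intro f
    have := congrFun hv f
    simpa [Matrix.mulVec_diagonal] using this
  simp only [qinner, Finset.mul_sum]
  refine Finset.sum_congr rfl fun f _ => ?_
  rw [Matrix.mulVec_diagonal]
  rcases eq_or_ne (v f) 0 with h0 | h0
  · simp [h0]
  · have he : (∏ i, zeta d ^ (f i).val) = zeta d ^ a.val :=
      mul_right_cancel₀ h0 (hv' f)
    rw [he]; ring

lemma qinner_smul (d N : ℕ) [NeZero d] (v x : (Fin N → ZMod d) → ℂ) (c : ℂ) :
    qinner d N v (c • x) = c * qinner d N v x := by
  simp [qinner, Finset.mul_sum]; exact Finset.sum_congr rfl fun f _ => by ring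

lemma qinner_add (d N : ℕ) [NeZero d] (v x y : (Fin N → ZMod d) → ℂ) :
    qinner d N v (x + y) = qinner d N v x + qinner d N v y := by
  simp [qinner, mul_add, Finset.sum_add_distrib]

/-- key scalar relation -/
lemma key_scalar (d N : ℕ) [NeZero d] (r s a b : ZMod d)
    (v w : (Fin N → ZMod d) → ℂ)
    (hv : tpow d N (clockZ d) *ᵥ v = zeta d ^ a.val • v)
    (hw : tpow d N (clockZ d) *ᵥ w = zeta d ^ b.val • w)
    (hT : qinner d N v (coll d N (Matrix.single r s 1) *ᵥ w) ≠ 0) :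
    a + s = r + b := by
  classical
  set T := coll d N (Matrix.single r s (1:ℂ)) with hTdef
  set c : ℂ := zeta d ^ r.val * (zeta d ^ s.val)⁻¹ with hc
  have h2 : tpow d N (clockZ d) *ᵥ (T *ᵥ w)
      = (c * zeta d ^ b.val) • (T *ᵥ w) := by
    rw [Matrix.mulVec_mulVec, tpow_clockZ_eq, diag_comm d N r s,
      Matrix.smul_mulVec, ← Matrix.mulVec_mulVec, ← tpow_clockZ_eq, hw,
      Matrix.mulVec_smul, smul_smul]
  have h1 := qinner_eig d N v (T *ᵥ w) a hv
  rw [h2, qinner_smul] at h1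
  rcases eq_or_ne (qinner d N v (T *ᵥ w)) 0 with h0 | h0
  · exact absurd h0 hT
  have hkey : c * zeta d ^ b.val = zeta d ^ a.val := mul_right_cancel₀ h0 h1
  have hs : (zeta d : ℂ) ^ s.val ≠ 0 := pow_ne_zero _ (zeta_ne_zero d)
  have hpow : zeta d ^ (r.val + b.val) = zeta d ^ (a.val + s.val) := by
    rw [pow_add, pow_add]
    rw [hc] at hkey
    rw [← hkey]
    field_simp
  have hmod : (r.val + b.val) ≡ (a.val + s.val) [MOD d] := by
    have horder : orderOf (zeta d) = d := (zeta_prim d).eq_orderOf.symm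
    have hd0 : 0 < d := Nat.pos_of_ne_zero (NeZero.ne d)
    have hone : zeta d ^ d = 1 := (zeta_prim d).pow_eq_one
    have e : ∀ m : ℕ, zeta d ^ (m % d) = zeta d ^ m := by
      intro m
      conv_rhs => rw [← Nat.mod_add_div m d]
      rw [pow_add, pow_mul, hone, one_pow, mul_one]
    have h1 : zeta d ^ ((r.val + b.val) % d) = zeta d ^ ((a.val + s.val) % d) := by
      rw [e, e]; exact hpow
    exact (zeta_prim d).pow_inj (Nat.mod_lt _ hd0) (Nat.mod_lt _ hd0) h1
  have hcast : ((r.val + b.val : ℕ) : ZMod d) = ((a.val + s.val : ℕ) : ZMod d) :=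
    (ZMod.natCast_eq_natCast_iff _ _ _).mpr hmod
  push_cast at hcast
  simp only [ZMod.natCast_val, ZMod.cast_id] at hcast
  linear_combination -hcast

end Aux

theorem stmt12 (d N : ℕ) [NeZero d] (hd : 2 ≤ d) (hodd : Odd d) (hN : 1 ≤ N)
    (p q : ZMod d) (hpq : p ≠ q) (a b : ZMod d)
    (v w : (Fin N → ZMod d) → ℂ)
    (hv : tpow d N (clockZ d) *ᵥ v = zeta d ^ a.val • v)
    (hw : tpow d N (clockZ d) *ᵥ w = zeta d ^ b.val • w)
    (hS : qinner d N v (coll d N (Smat d p q) *ᵥ w) = 0) :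
    qinner d N v (coll d N (Amat d p q) *ᵥ w) = 0 := by
  classical
  set B := coll d N (Matrix.single p q (1:ℂ)) with hB
  set C := coll d N (Matrix.single q p (1:ℂ)) with hC
  set sB := qinner d N v (B *ᵥ w) with hsB
  set sC := qinner d N v (C *ᵥ w) with hsC
  have collS : coll d N (Smat d p q) = B + C := by
    simp only [hB, hC, coll, Smat, site]
    rw [← Finset.sum_add_distrib]
    refine Finset.sum_congr rfl fun i _ => ?_
    ext f g
    simp [Matrix.add_apply, add_mul]
  have collA : coll d N (Amat d p q) = (-Complex.I) • B + Complex.I • C := by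
    simp only [hB, hC, coll, Amat, site, Finset.smul_sum]
    rw [← Finset.sum_add_distrib]
    refine Finset.sum_congr rfl fun i _ => ?_
    ext f g
    simp only [Matrix.of_apply, Matrix.add_apply, Matrix.smul_apply, smul_eq_mul,
      std_apply, Amat, add_mul]
    split_ifs <;> ring
  have hSsum : sB + sC = 0 := by
    rw [collS, Matrix.add_mulVec, qinner_add] at hS
    exact hS
  have hone : sB = 0 ∨ sC = 0 := by
    by_contra hcon
    push_neg at hcon
    have e1 : a + q = p + b := key_scalar d N p q a b v w hv hw hcon.1
    have e2 : a + p = q + b := key_scalar d N q p a b v w hv hw hcon.2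
    have h2pq : (2 : ZMod d) * p = 2 * q := by
      have : p + p = q + q := by linear_combination e2 - e1
      ring_nf
      linear_combination this
    have hu : IsUnit (2 : ZMod d) := by
      have : IsUnit ((2 : ℕ) : ZMod d) :=
        (ZMod.isUnit_iff_coprime 2 d).mpr (Nat.coprime_two_left.mpr hodd)
      simpa using this
    exact hpq (hu.mul_left_cancel h2pq)
  have hboth : sB = 0 ∧ sC = 0 := by
    rcases hone with h | h
    · exact ⟨h, by linear_combination hSsum - h⟩
    · exact ⟨by linear_combination hSsum - h, h⟩
  rw [collA, Matrix.add_mulVec, qinner_add, Matrix.smul_mulVec,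
    Matrix.smul_mulVec, qinner_smul, qinner_smul, ← hsB, ← hsC,
    hboth.1, hboth.2]
  ring
end

section
/- Let v be a permutation-invariant N-qudit vector, and let ℓ, m ∈ ZMod d be such that the sets {ℓ, ℓ+1} and {m, m+1} are disjoint. Then ⟨v| D~^(ℓ) D~^(m) |v⟩ = 0. -/
open Matrix Complex Finset

/-- The content of a configuration f. -/
noncomputable def cont' {d N : ℕ} (f : Fin N → ZMod d) : ZMod d → ℤ :=
  fun k => ((Finset.univ.filter fun i => f i = k).card : ℤ)

lemma dicke_apply (d N : ℕ) [NeZero d] (u : ZMod d → ℤ) (f : Fin N → ZMod d) :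
    dicke d N u f = if cont' f = u then 1 else 0 := by
  simp [dicke, cont', funext_iff]

lemma v_apply (d N : ℕ) [NeZero d] (β : (ZMod d → ℤ) →₀ ℂ) (f : Fin N → ZMod d) :
    (β.sum fun u c => c • dicke d N u) f = β (cont' f) := by
  classical
  rw [Finsupp.sum, Finset.sum_apply]
  have h1 : ∀ u ∈ β.support, (β u • dicke d N u) f
      = if u = cont' f then β u else 0 := by
    intro u _
    simp [dicke_apply, eq_comm]
  rw [Finset.sum_congr rfl h1, Finset.sum_ite_eq' β.support (cont' f) β]
  split_ifs with h
  · rfl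
  · exact (Finsupp.notMem_support_iff.mp h).symm

lemma Dmat_diag_ne (d : ℕ) [NeZero d] (ℓ : ZMod d) {a b : ZMod d} (h : a ≠ b) :
    Dmat d ℓ a b = 0 := by
  simp only [Dmat, Matrix.sub_apply]
  rw [Matrix.single_apply_of_ne _ _ _ _ _ (by rintro ⟨rfl, rfl⟩; exact h rfl),
    Matrix.single_apply_of_ne _ _ _ _ _ (by rintro ⟨rfl, rfl⟩; exact h rfl),
    sub_zero]

lemma coll_D_mulVec (d N : ℕ) [NeZero d] (ℓ : ZMod d)
    (w : (Fin N → ZMod d) → ℂ) (f : Fin N → ZMod d) :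
    (coll d N (Dmat d ℓ) *ᵥ w) f
      = ((cont' f ℓ - cont' f (ℓ + 1) : ℤ) : ℂ) * w f := by
  classical
  have h1 : (coll d N (Dmat d ℓ) *ᵥ w) f
      = ∑ i : Fin N, ∑ g : Fin N → ZMod d,
          (site d N (Dmat d ℓ) i) f g * w g := by
    simp only [coll, Matrix.mulVec, dotProduct, Matrix.sum_apply,
      Finset.sum_mul]
    exact Finset.sum_comm
  have hsite : ∀ i : Fin N,
      ∑ g : Fin N → ZMod d, (site d N (Dmat d ℓ) i) f g * w g
        = Dmat d ℓ (f i) (f i) * w f := by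
    intro i
    rw [Finset.sum_eq_single f]
    · simp [site]
    · intro g _ hg
      obtain ⟨j, hj⟩ := Function.ne_iff.mp hg
      by_cases hji : j = i
      · subst hji
        simp [site, Dmat_diag_ne d ℓ (Ne.symm hj)]
      · have : ∏ j' ∈ Finset.univ.erase i, (if f j' = g j' then (1 : ℂ) else 0) = 0 :=
          Finset.prod_eq_zero (Finset.mem_erase.mpr ⟨hji, Finset.mem_univ j⟩)
            (if_neg fun h => hj h.symm)
        simp [site, this]
    · intro h; exact absurd (Finset.mem_univ f) h
  rw [h1]
  simp_rw [hsite]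
  rw [← Finset.sum_mul]
  congr 1
  have hDd : ∀ a : ZMod d, Dmat d ℓ a a
      = (if a = ℓ then (1 : ℂ) else 0) - (if a = ℓ + 1 then 1 else 0) := by
    intro a
    simp [Dmat, Matrix.single, eq_comm]
  simp_rw [hDd]
  rw [Finset.sum_sub_distrib, Finset.sum_boole, Finset.sum_boole]
  simp [cont']

lemma cont'_comp {d N : ℕ} (σ : Equiv.Perm (ZMod d)) (f : Fin N → ZMod d)
    (k : ZMod d) : cont' (⇑σ ∘ f) k = cont' f (σ.symm k) := by
  unfold cont'
  congr 2
  ext i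
  simp [Equiv.apply_eq_iff_eq_symm_apply]

theorem stmt18 (d N : ℕ) [NeZero d] (hd : 2 ≤ d) (hN : 1 ≤ N)
    (v : (Fin N → ZMod d) → ℂ) (β : (ZMod d → ℤ) →₀ ℂ)
    (hadm : ∀ u : ZMod d → ℤ, ¬ admissible d N u → β u = 0)
    (hperm : ∀ π : Equiv.Perm (ZMod d), ∀ u : ZMod d → ℤ, β (u ∘ π) = β u)
    (hv : v = β.sum fun u c => c • dicke d N u)
    (ℓ m : ZMod d)
    (hdisj : Disjoint ({ℓ, ℓ + 1} : Set (ZMod d)) ({m, m + 1} : Set (ZMod d))) :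
    qinner d N v ((coll d N (Dmat d ℓ) * coll d N (Dmat d m)) *ᵥ v) = 0 := by
  classical
  haveI : Fact (1 < d) := ⟨hd⟩
  have hsucc : ∀ a : ZMod d, a + 1 ≠ a := by
    intro a h
    have : (1 : ZMod d) = 0 := by
      have := congrArg (fun x => x - a) h
      simpa using this
    exact one_ne_zero this
  -- disjointness facts
  have hmem : ∀ a : ZMod d, a ∈ ({ℓ, ℓ + 1} : Set (ZMod d)) →
      a ∈ ({m, m + 1} : Set (ZMod d)) → False :=
    fun a h1 h2 => Set.disjoint_left.mp hdisj h1 h2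
  have hmℓ : m ≠ ℓ := fun h =>
    hmem ℓ (Set.mem_insert _ _) (by rw [Set.mem_insert_iff]; exact Or.inl h.symm)
  have hmℓ1 : m ≠ ℓ + 1 := fun h =>
    hmem (ℓ + 1) (by simp) (by rw [Set.mem_insert_iff]; exact Or.inl h.symm)
  have hm1ℓ : m + 1 ≠ ℓ := fun h =>
    hmem ℓ (Set.mem_insert _ _) (by rw [Set.mem_insert_iff]; right; simp [h.symm])
  have hm1ℓ1 : m + 1 ≠ ℓ + 1 := fun h =>
    hmem (ℓ + 1) (by simp) (by rw [Set.mem_insert_iff]; right; simp [h.symm])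
  set σ : Equiv.Perm (ZMod d) := Equiv.swap ℓ (ℓ + 1) with hσ
  have hσm : σ m = m := Equiv.swap_apply_of_ne_of_ne hmℓ hmℓ1
  have hσm1 : σ (m + 1) = m + 1 := Equiv.swap_apply_of_ne_of_ne hm1ℓ hm1ℓ1
  have hσℓ : σ ℓ = ℓ + 1 := Equiv.swap_apply_left ℓ (ℓ + 1)
  have hσℓ1 : σ (ℓ + 1) = ℓ := Equiv.swap_apply_right ℓ (ℓ + 1)
  have hσsymm : σ.symm = σ := Equiv.symm_swap ℓ (ℓ + 1)
  -- the eigenvalue function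
  set E : ZMod d → (Fin N → ZMod d) → ℂ :=
    fun a f => ((cont' f a - cont' f (a + 1) : ℤ) : ℂ) with hE
  have hmv : ∀ f : Fin N → ZMod d,
      ((coll d N (Dmat d ℓ) * coll d N (Dmat d m)) *ᵥ v) f
        = E ℓ f * (E m f * v f) := by
    intro f
    rw [← Matrix.mulVec_mulVec, coll_D_mulVec]
    rw [coll_D_mulVec]
  have hvf : ∀ f : Fin N → ZMod d, v f = β (cont' f) := by
    intro f; rw [hv]; exact v_apply d N β f
  -- the summand as a function of f
  set T : (Fin N → ZMod d) → ℂ :=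
    fun f => star (β (cont' f)) * (E ℓ f * (E m f * β (cont' f))) with hT
  have hS : qinner d N v ((coll d N (Dmat d ℓ) * coll d N (Dmat d m)) *ᵥ v)
      = ∑ f : Fin N → ZMod d, T f := by
    unfold qinner
    apply Finset.sum_congr rfl
    intro f _
    rw [hmv f, hvf f]
  rw [hS]
  -- cont of σ ∘ f
  have hcont : ∀ f : Fin N → ZMod d, cont' (⇑σ ∘ f) = cont' f ∘ ⇑σ := by
    intro f
    funext k
    rw [cont'_comp, hσsymm]
    rfl
  have hβσ : ∀ f : Fin N → ZMod d, β (cont' (⇑σ ∘ f)) = β (cont' f) := by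
    intro f
    rw [hcont f]
    exact hperm σ (cont' f)
  have hTneg : ∀ f : Fin N → ZMod d, T (⇑σ ∘ f) = -T f := by
    intro f
    have hEℓ : E ℓ (⇑σ ∘ f) = -E ℓ f := by
      simp only [hE]
      rw [cont'_comp, cont'_comp, hσsymm]
      show ((cont' f (σ ℓ) - cont' f (σ (ℓ + 1)) : ℤ) : ℂ) = _
      rw [hσℓ, hσℓ1]
      push_cast
      ring
    have hEm : E m (⇑σ ∘ f) = E m f := by
      simp only [hE]
      rw [cont'_comp, cont'_comp, hσsymm]
      show ((cont' f (σ m) - cont' f (σ (m + 1)) : ℤ) : ℂ) = _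
      rw [hσm, hσm1]
    simp only [hT, hβσ f, hEℓ, hEm]
    ring
  -- reindex by the equivalence f ↦ σ ∘ f
  have hre : ∑ f : Fin N → ZMod d, T f = ∑ f : Fin N → ZMod d, T (⇑σ ∘ f) := by
    exact (Fintype.sum_equiv (Equiv.arrowCongr (Equiv.refl (Fin N)) σ)
      (fun f => T (⇑σ ∘ f)) T (fun f => rfl)).symm
  have hneg : ∑ f : Fin N → ZMod d, T f = -∑ f : Fin N → ZMod d, T f := by
    conv_lhs => rw [hre]
    rw [show (∑ f : Fin N → ZMod d, T (⇑σ ∘ f))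
        = ∑ f : Fin N → ZMod d, -T f from Finset.sum_congr rfl fun f _ => hTneg f]
    exact Finset.sum_neg_distrib T
  linear_combination hneg / 2
end
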